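/- Let μ > 0, d > 0, r ∈ R. The unique minimizer of f(z) = μ|z| + (1/2)(z − r)² over z ∈ [−d, d] equals sign(r)·min{max(|r| − μ, 0), d}. -/
import Mathlib

private lemma key_pos (μ r d z : ℝ) (hμ : 0 < μ) (hd : 0 < d) (hr : 0 < r)
    (hz1 : -d ≤ z) (hz2 : z ≤ d) (hne : z ≠ min (max (r - μ) 0) d) :
    μ * |min (max (r - μ) 0) d| + (1 / 2) * (min (max (r - μ) 0) d - r) ^ 2 <
      μ * |z| + (1 / 2) * (z - r) ^ 2 := by
  rcases le_total (r - μ) 0 with h | h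
  · have hm : min (max (r - μ) 0) d = 0 := by
      rw [max_eq_right h, min_eq_left hd.le]
    rw [hm] at hne ⊢
    simp only [abs_zero]
    rcases abs_cases z with ⟨he, hs⟩ | ⟨he, hs⟩ <;> rw [he]
    · have hz : 0 < z := lt_of_le_of_ne hs (Ne.symm hne)
      nlinarith [sq_nonneg z, mul_pos hz hz]
    · nlinarith [mul_pos hμ (neg_pos.mpr hs), mul_pos hr (neg_pos.mpr hs), sq_nonneg z]
  · have hmax : max (r - μ) 0 = r - μ := max_eq_left h
    rcases le_total (r - μ) d with h2 | h2
    · have hm : min (max (r - μ) 0) d = r - μ := by rw [hmax, min_eq_left h2]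
      rw [hm] at hne ⊢
      rw [abs_of_nonneg h]
      have hq : 0 < (z - (r - μ)) ^ 2 := by
        have : z - (r - μ) ≠ 0 := sub_ne_zero.mpr hne
        positivity
      rcases abs_cases z with ⟨he, hs⟩ | ⟨he, hs⟩ <;> rw [he]
      · nlinarith [hq]
      · nlinarith [hq, mul_pos hμ (neg_pos.mpr hs)]
    · have hm : min (max (r - μ) 0) d = d := by rw [hmax, min_eq_right h2]
      rw [hm] at hne ⊢
      rw [abs_of_nonneg hd.le]
      have hzd : z < d := lt_of_le_of_ne hz2 hne
      have hdz : 0 < d - z := by linarith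
      have h1 : z ≤ |z| := le_abs_self z
      nlinarith [mul_pos hdz hdz, mul_pos hμ hdz]

private lemma key (μ r d z : ℝ) (hμ : 0 < μ) (hd : 0 < d)
    (hz1 : -d ≤ z) (hz2 : z ≤ d)
    (hne : z ≠ Real.sign r * min (max (|r| - μ) 0) d) :
    μ * |Real.sign r * min (max (|r| - μ) 0) d| +
      (1 / 2) * (Real.sign r * min (max (|r| - μ) 0) d - r) ^ 2 <
      μ * |z| + (1 / 2) * (z - r) ^ 2 := by
  rcases lt_trichotomy r 0 with hr | hr | hr
  · rw [Real.sign_of_neg hr, abs_of_neg hr] at hne ⊢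
    have h := key_pos μ (-r) d (-z) hμ hd (by linarith) (by linarith) (by linarith)
      (fun hc => hne (by linarith))
    set m := min (max (-r - μ) 0) d with hmdef
    have e1 : |(-1 : ℝ) * m| = |m| := by rw [neg_one_mul, abs_neg]
    have e2 : ((-1 : ℝ) * m - r) ^ 2 = (m - -r) ^ 2 := by ring
    have e3 : (z - r) ^ 2 = (-z - -r) ^ 2 := by ring
    rw [e1, e2, e3, ← abs_neg z]
    exact h
  · subst hr
    simp only [Real.sign_zero, zero_mul, abs_zero, ne_eq] at hne ⊢
    rcases abs_cases z with ⟨he, hs⟩ | ⟨he, hs⟩ <;> rw [he]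
    · have hz : 0 < z := lt_of_le_of_ne hs (Ne.symm hne)
      nlinarith [mul_pos hμ hz, mul_pos hz hz]
    · nlinarith [mul_pos hμ (neg_pos.mpr hs), mul_pos (neg_pos.mpr hs) (neg_pos.mpr hs)]
  · rw [Real.sign_of_pos hr, abs_of_pos hr, one_mul] at hne ⊢
    exact key_pos μ r d z hμ hd hr hz1 hz2 hne

theorem stmt16 (μ r d : ℝ) (hμ : 0 < μ) (hd : 0 < d) :
    let zstar := Real.sign r * min (max (|r| - μ) 0) d
    zstar ∈ Set.Icc (-d) d ∧
    (∀ z ∈ Set.Icc (-d) d,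
      μ * |zstar| + (1 / 2) * (zstar - r) ^ 2 ≤ μ * |z| + (1 / 2) * (z - r) ^ 2) ∧
    (∀ z ∈ Set.Icc (-d) d,
      (∀ w ∈ Set.Icc (-d) d,
        μ * |z| + (1 / 2) * (z - r) ^ 2 ≤ μ * |w| + (1 / 2) * (w - r) ^ 2) →
      z = zstar) := by
  intro zstar
  have hm0 : 0 ≤ min (max (|r| - μ) 0) d := le_min (le_max_right _ _) hd.le
  have hmd : min (max (|r| - μ) 0) d ≤ d := min_le_right _ _
  have hmem : zstar ∈ Set.Icc (-d) d := by
    have hsgn : -1 ≤ Real.sign r ∧ Real.sign r ≤ 1 := by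
      rcases lt_trichotomy r 0 with h | h | h <;>
        simp [Real.sign_of_neg, Real.sign_of_pos, h]
    simp only [zstar, Set.mem_Icc]
    constructor
    · nlinarith [mul_le_mul_of_nonneg_right hsgn.1 hm0]
    · nlinarith [mul_le_mul_of_nonneg_right hsgn.2 hm0]
  refine ⟨hmem, ?_, ?_⟩
  · intro z hz
    by_cases hne : z = zstar
    · subst hne; exact le_rfl
    · exact le_of_lt (key μ r d z hμ hd hz.1 hz.2 hne)
  · intro z hz hmin
    by_contra hne
    have h1 := key μ r d z hμ hd hz.1 hz.2 hne
    have h2 := hmin zstar hmem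
    simp only [zstar] at h2
    linarith
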